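/- Let n ≥ 2, let σ : ℂ → ℂ be a field endomorphism (a unital ring homomorphism), and let P, Q ∈ M_n(ℂ) be invertible. Then the map Φ : M_n(ℂ) → M_n(ℂ) defined by Φ(A) = P · σ(Aᵀ) · Q (σ applied entrywise to the transpose of A) does not preserve mutual strong Birkhoff–James orthogonality in one direction; that is, there exist A, B ∈ M_n(ℂ) with A ⊥⊥ B but not Φ(A) ⊥⊥ Φ(B). -/

import Mathlib

open Matrix
open scoped Matrix.Norms.L2Operator

/-- `a` is strongly Birkhoff–James orthogonal to `b`. -/
def StrongBJ {𝔄 : Type*} [NormedRing 𝔄] (a b : 𝔄) : Prop :=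
  ∀ c : 𝔄, ‖a‖ ≤ ‖a + b * c‖

/-- `a` and `b` are mutually strongly Birkhoff–James orthogonal. -/
def MutualBJ {𝔄 : Type*} [NormedRing 𝔄] (a b : 𝔄) : Prop :=
  StrongBJ a b ∧ StrongBJ b a

lemma coord_le_norm {n : ℕ} (v : EuclideanSpace ℂ (Fin n)) (i : Fin n) :
    ‖v i‖ ≤ ‖v‖ := by
  have h := norm_inner_le_norm (𝕜 := ℂ) (EuclideanSpace.single i (1 : ℂ)) v
  simpa [EuclideanSpace.inner_single_left] using h

lemma entry_le_norm {n : ℕ} (M : Matrix (Fin n) (Fin n) ℂ) (i j : Fin n) :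
    ‖M i j‖ ≤ ‖M‖ := by
  have h := M.l2_opNorm_mulVec (EuclideanSpace.single j 1)
  rw [EuclideanSpace.norm_single, norm_one, mul_one] at h
  refine le_trans (le_trans ?_ (coord_le_norm ((EuclideanSpace.equiv (Fin n) ℂ).symm
    (M *ᵥ (EuclideanSpace.single j 1))) i)) h
  have h2 : (M *ᵥ (EuclideanSpace.single j (1:ℂ))) i = M i j := by
    have h1 : (EuclideanSpace.single j (1:ℂ) : Fin n → ℂ) = Pi.single j 1 := rfl
    rw [h1, M.mulVec_single]; simp
  exact le_of_eq (congrArg _ h2.symm)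

lemma stdBasis_conjT {n : ℕ} (i j : Fin n) :
    (single i j (1:ℂ))ᴴ = single j i 1 := by
  ext a b
  by_cases h1 : j = a <;> by_cases h2 : i = b <;>
    simp [conjTranspose_apply, single, apply_ite (starRingEnd ℂ), h1, h2]

lemma norm_stdBasis_one {n : ℕ} (i j : Fin n) :
    ‖single i j (1:ℂ)‖ = 1 := by
  have hdiag : ∀ k : Fin n, ‖single k k (1:ℂ)‖ = 1 := by
    intro k
    have hsq := Matrix.l2_opNorm_conjTranspose_mul_self (single k k (1:ℂ))
    rw [stdBasis_conjT, single_mul_single_same, one_mul] at hsq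
    have hge : (1:ℝ) ≤ ‖single k k (1:ℂ)‖ := by
      have := entry_le_norm (single k k (1:ℂ)) k k
      simpa using this
    nlinarith
  have hsq := Matrix.l2_opNorm_conjTranspose_mul_self (single i j (1:ℂ))
  rw [stdBasis_conjT, single_mul_single_same, one_mul, hdiag j] at hsq
  have hnn : (0:ℝ) ≤ ‖single i j (1:ℂ)‖ := norm_nonneg _
  nlinarith

lemma stdBasis_transpose_map {n : ℕ} (σ : ℂ →+* ℂ) (i j : Fin n) :
    ((single i j (1:ℂ))ᵀ).map σ = single j i 1 := by
  ext a b
  by_cases h1 : j = a <;> by_cases h2 : i = b <;>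
    simp [transpose_apply, Matrix.map_apply, single, apply_ite σ, h1, h2]

theorem stmt8 {n : ℕ} (hn : 2 ≤ n) (σ : ℂ →+* ℂ) (P Q : Matrix (Fin n) (Fin n) ℂ)
    (hP : IsUnit P) (hQ : IsUnit Q) :
    ∃ A B : Matrix (Fin n) (Fin n) ℂ,
      MutualBJ A B ∧ ¬ MutualBJ (P * (Aᵀ).map σ * Q) (P * (Bᵀ).map σ * Q) := by
  obtain ⟨uP, rfl⟩ := hP
  obtain ⟨uQ, rfl⟩ := hQ
  have h01 : (0 : ℕ) < n := by omega
  have h11 : (1 : ℕ) < n := by omega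
  set i0 : Fin n := ⟨0, h01⟩
  set i1 : Fin n := ⟨1, h11⟩
  have hne : i0 ≠ i1 := by simp [i0, i1, Fin.ext_iff]
  refine ⟨single i0 i1 1, single i1 i1 1, ⟨?_, ?_⟩, ?_⟩
  · -- StrongBJ A B
    intro c
    have hentry : (single i0 i1 (1:ℂ) + single i1 i1 (1:ℂ) * c) i0 i1
        = 1 := by
      rw [Matrix.add_apply, single_apply_same,
        single_mul_apply_of_ne (h := hne), add_zero]
    calc ‖single i0 i1 (1:ℂ)‖ = 1 := norm_stdBasis_one i0 i1
      _ = ‖(single i0 i1 (1:ℂ) + single i1 i1 (1:ℂ) * c) i0 i1‖ := by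
            rw [hentry, norm_one]
      _ ≤ _ := entry_le_norm _ i0 i1
  · -- StrongBJ B A
    intro c
    have hentry : (single i1 i1 (1:ℂ) + single i0 i1 (1:ℂ) * c) i1 i1
        = 1 := by
      rw [Matrix.add_apply, single_apply_same,
        single_mul_apply_of_ne (h := Ne.symm hne), add_zero]
    calc ‖single i1 i1 (1:ℂ)‖ = 1 := norm_stdBasis_one i1 i1
      _ = ‖(single i1 i1 (1:ℂ) + single i0 i1 (1:ℂ) * c) i1 i1‖ := by
            rw [hentry, norm_one]
      _ ≤ _ := entry_le_norm _ i1 i1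
  · -- not MutualBJ of images
    rw [stdBasis_transpose_map σ i0 i1, stdBasis_transpose_map σ i1 i1]
    rintro ⟨hBJ, -⟩
    have hQQ : ∀ X : Matrix (Fin n) (Fin n) ℂ,
        (uQ : Matrix (Fin n) (Fin n) ℂ) * ((uQ⁻¹ : (Matrix (Fin n) (Fin n) ℂ)ˣ) * X) = X :=
      fun X => uQ.mul_inv_cancel_left X
    set c₀ : Matrix (Fin n) (Fin n) ℂ :=
      -(((uQ⁻¹ : (Matrix (Fin n) (Fin n) ℂ)ˣ) : Matrix (Fin n) (Fin n) ℂ)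
        * (single i1 i0 1 * (uQ : Matrix (Fin n) (Fin n) ℂ))) with hc₀
    have h0 : (uP : Matrix (Fin n) (Fin n) ℂ) * single i1 i0 (1:ℂ)
          * (uQ : Matrix (Fin n) (Fin n) ℂ)
        + (uP : Matrix (Fin n) (Fin n) ℂ) * single i1 i1 (1:ℂ)
          * (uQ : Matrix (Fin n) (Fin n) ℂ) * c₀ = 0 := by
      rw [hc₀, mul_neg, mul_assoc ((uP : Matrix (Fin n) (Fin n) ℂ) * single i1 i1 (1:ℂ)),
        hQQ, mul_assoc (uP : Matrix (Fin n) (Fin n) ℂ) (single i1 i1 (1:ℂ)),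
        ← mul_assoc (single i1 i1 (1:ℂ)), single_mul_single_same, one_mul,
        ← mul_assoc (uP : Matrix (Fin n) (Fin n) ℂ) (single i1 i0 (1:ℂ)),
        add_neg_cancel]
    have hle := hBJ c₀
    rw [h0, norm_zero] at hle
    have hzero : (uP : Matrix (Fin n) (Fin n) ℂ) * single i1 i0 1
        * (uQ : Matrix (Fin n) (Fin n) ℂ) = 0 :=
      norm_le_zero_iff.mp hle
    have hE : single i1 i0 (1:ℂ) = 0 := by
      have heq : single i1 i0 (1:ℂ)
          = ((uP⁻¹ : (Matrix (Fin n) (Fin n) ℂ)ˣ) : Matrix (Fin n) (Fin n) ℂ)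
            * ((uP : Matrix (Fin n) (Fin n) ℂ) * single i1 i0 (1:ℂ)
              * (uQ : Matrix (Fin n) (Fin n) ℂ))
            * ((uQ⁻¹ : (Matrix (Fin n) (Fin n) ℂ)ˣ) : Matrix (Fin n) (Fin n) ℂ) := by
        rw [mul_assoc _ _ ((uQ⁻¹ : (Matrix (Fin n) (Fin n) ℂ)ˣ) : Matrix (Fin n) (Fin n) ℂ),
          Units.mul_inv_cancel_right, Units.inv_mul_cancel_left]
      rw [heq, hzero, mul_zero, zero_mul]
    have := congrFun (congrFun hE i1) i0
    simp at this
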